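/- Assume (H6): there exists k > 0 such that ⟨∇V(x), f(t,x,y)⟩ ≥ −k·V(x) for all t > 0 and all x, y ∈ [0,∞)^N. Then every positive solution x of the delay differential equation satisfies V(x(t−τ)) ≤ e^{kτ}·V(x(t)) for all t ≥ τ. -/

import Mathlib

open Filter Set RealInnerProductSpace

/-- under (H6) with constant k, every positive solution satisfies
V(x(t−τ)) ≤ e^{kτ}·V(x(t)) for all t ≥ τ. -/
theorem delayed_value_bound_H6
(N : ℕ) (hN : 1 ≤ N) (τ : ℝ) (hτ : 0 < τ)
    (f : ℝ → EuclideanSpace ℝ (Fin N) → EuclideanSpace ℝ (Fin N) → EuclideanSpace ℝ (Fin N))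
    (hf : ContinuousOn
      (fun p : ℝ × EuclideanSpace ℝ (Fin N) × EuclideanSpace ℝ (Fin N) => f p.1 p.2.1 p.2.2)
      {p | 0 ≤ p.1 ∧ (∀ j, 0 ≤ p.2.1 j) ∧ (∀ j, 0 ≤ p.2.2 j)})
    (V : EuclideanSpace ℝ (Fin N) → ℝ)
    (hVC1 : ContDiff ℝ 1 V) (hV0 : V 0 = 0) (hVnn : ∀ u, 0 ≤ V u)
    (hVpos : ∀ u : EuclideanSpace ℝ (Fin N), (∀ i, 0 ≤ u i) → u ≠ 0 → 0 < V u)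
    (hVtend : Tendsto V (nhds 0) (nhds 0))
    -- (H6)
    (k : ℝ) (hk : 0 < k)
    (hH6 : ∀ t, 0 < t →
      ∀ u v : EuclideanSpace ℝ (Fin N), (∀ i, 0 ≤ u i) → (∀ i, 0 ≤ v i) →
        -k * V u ≤ ⟪gradient V u, f t u v⟫)
(x : ℝ → EuclideanSpace ℝ (Fin N))
    (hxc : ContinuousOn x (Ici (-τ)))
    (hxpos : ∀ t, -τ ≤ t → ∀ j, 0 < x t j)
    (hxde : ∀ t, 0 < t → HasDerivAt x (f t (x t) (x (t - τ))) t) :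
    ∀ t, τ ≤ t → V (x (t - τ)) ≤ Real.exp (k * τ) * V (x t) := by
  intro t ht
  have htτ : 0 ≤ t - τ := by linarith
  -- h s := exp (k*s) * V (x s)
  set h : ℝ → ℝ := fun s => Real.exp (k * s) * V (x s) with hh
  -- derivative facts on (t-τ, t)
  have hderiv : ∀ s ∈ Ioo (t - τ) t, HasDerivAt h
      (Real.exp (k * s) * (k * V (x s) + ⟪gradient V (x s), f s (x s) (x (s - τ))⟫)) s := by
    intro s hs
    have hs0 : 0 < s := lt_of_le_of_lt htτ hs.1
    have hx' := hxde s hs0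
    have hVd : HasFDerivAt V ((InnerProductSpace.toDual ℝ _) (gradient V (x s))) (x s) :=
      ((hVC1.differentiable one_ne_zero) (x s)).hasGradientAt.hasFDerivAt
    have hVx : HasDerivAt (fun u => V (x u))
        (⟪gradient V (x s), f s (x s) (x (s - τ))⟫) s := by
      have := hVd.comp_hasDerivAt s hx'
      simpa [Function.comp_def] using this
    have hexp : HasDerivAt (fun u => Real.exp (k * u)) (k * Real.exp (k * s)) s := by
      simpa [mul_comm, Function.comp_def] using (Real.hasDerivAt_exp (k * s)).comp s
        ((hasDerivAt_id s).const_mul k)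
    have := hexp.mul hVx
    refine HasDerivAt.congr_deriv this ?_
    ring
  have hmono : MonotoneOn h (Icc (t - τ) t) := by
    apply monotoneOn_of_deriv_nonneg (convex_Icc _ _)
    · exact (Real.continuous_exp.comp (continuous_const.mul continuous_id)).continuousOn.mul
        ((hVC1.continuous.comp_continuousOn (hxc.mono (by
          intro s hs
          have : t - τ ≤ s := hs.1
          simp only [mem_Ici]; linarith))))
    · intro s hs
      rw [interior_Icc] at hs
      exact ((hderiv s hs).differentiableAt).differentiableWithinAt
    · intro s hs
      rw [interior_Icc] at hs
      rw [(hderiv s hs).deriv]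
      have hs0 : 0 < s := lt_of_le_of_lt htτ hs.1
      have h1 : ∀ i, 0 ≤ x s i := fun i => (hxpos s (by linarith) i).le
      have h2 : ∀ i, 0 ≤ x (s - τ) i := fun i => (hxpos (s - τ) (by linarith) i).le
      have := hH6 s hs0 (x s) (x (s - τ)) h1 h2
      have : 0 ≤ k * V (x s) + ⟪gradient V (x s), f s (x s) (x (s - τ))⟫ := by linarith
      positivity
  have hle : h (t - τ) ≤ h t :=
    hmono ⟨le_rfl, by linarith⟩ ⟨by linarith, le_rfl⟩ (by linarith)
  have hexp_pos : (0:ℝ) < Real.exp (k * (t - τ)) := Real.exp_pos _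
  rw [hh] at hle
  simp only at hle
  have key : Real.exp (k * (t - τ)) * V (x (t - τ)) ≤ Real.exp (k * t) * V (x t) := hle
  have : V (x (t - τ)) ≤ Real.exp (k * t) / Real.exp (k * (t - τ)) * V (x t) := by
    rw [div_mul_eq_mul_div, le_div_iff₀ hexp_pos]
    linarith [key]
  rwa [← Real.exp_sub, show k * t - k * (t - τ) = k * τ by ring] at this
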